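/- The rotation distance between the left caterpillar and the right caterpillar on n internal nodes is exactly n - 1. -/

import Mathlib

inductive BT : Type
  | leaf : BT
  | node : BT → BT → BT
deriving DecidableEq

namespace BT

/-- number of internal nodes -/
def size : BT → ℕ
  | leaf => 0
  | node l r => size l + size r + 1

/-- number of leaves -/
def nl (t : BT) : ℕ := size t + 1

/-- one (right) rotation somewhere in the tree -/
inductive Rot : BT → BT → Prop
  | root (a b c : BT) : Rot (node (node a b) c) (node a (node b c))
  | congrL {l l' : BT} (r : BT) : Rot l l' → Rot (node l r) (node l' r)
  | congrR (l : BT) {r r' : BT} : Rot r r' → Rot (node l r) (node l r')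

/-- a rotation move: a right rotation or its inverse (a left rotation) -/
def Move (s t : BT) : Prop := Rot s t ∨ Rot t s

/-- `Chain n s t`: `s` is transformed into `t` by `n` rotation moves -/
inductive Chain : ℕ → BT → BT → Prop
  | refl (t : BT) : Chain 0 t t
  | step {n : ℕ} {s u t : BT} : Move s u → Chain n u t → Chain (n + 1) s t

/-- rotation distance -/
noncomputable def dR (s t : BT) : ℕ := sInf {n | Chain n s t}

def isNode : BT → Bool
  | leaf => false
  | node _ _ => true

/-- the multiset of leaf partitions induced by internal edges, where the leaves of the
tree are numbered from `k` on, left to right; each internal edge is recorded by the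
set of leaf numbers below it. -/
def iparts : BT → ℕ → Multiset (Finset ℕ)
  | leaf, _ => 0
  | node l r, k =>
      ((if isNode l then {Finset.Ico k (k + nl l)} else 0) + iparts l k)
        + ((if isNode r then {Finset.Ico (k + nl l) (k + nl l + nl r)} else 0)
            + iparts r (k + nl l))

/-- number of common edge pairs -/
def commonEdges (s t : BT) : ℕ := ((iparts s 0) ∩ (iparts t 0)).card

/-- the right caterpillar: every internal node's left child is a leaf -/
def rightCat : ℕ → BT
  | 0 => leaf
  | n + 1 => node leaf (rightCat n)

/-- the left caterpillar: every internal node's right child is a leaf -/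
def leftCat : ℕ → BT
  | 0 => leaf
  | n + 1 => node (leftCat n) leaf

/-- depth of the rightmost leaf -/
def rdep : BT → ℕ
  | leaf => 0
  | node _ r => rdep r + 1

lemma rot_rdep {s t : BT} (h : Rot s t) : rdep t = rdep s + 1 ∨ rdep t = rdep s := by
  induction h with
  | root a b c => left; simp [rdep]
  | congrL r h ih => right; simp [rdep]
  | congrR l h ih => rcases ih with h1 | h1 <;> simp [rdep, h1]

lemma move_rdep {s t : BT} (h : Move s t) : rdep t ≤ rdep s + 1 ∧ rdep s ≤ rdep t + 1 := by
  rcases h with h | h <;> rcases rot_rdep h with h1 | h1 <;> omega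

lemma chain_rdep {m : ℕ} {s t : BT} (h : Chain m s t) :
    rdep t ≤ rdep s + m ∧ rdep s ≤ rdep t + m := by
  induction h with
  | refl t => omega
  | step hm hc ih => have := move_rdep hm; omega

lemma rdep_rightCat (n : ℕ) : rdep (rightCat n) = n := by
  induction n with
  | zero => rfl
  | succ k ih => simp [rightCat, rdep, ih]

lemma chain_lc_rc (k m : ℕ) :
    Chain k (node (leftCat k) (rightCat m)) (rightCat (m + k + 1)) := by
  induction k generalizing m with
  | zero => exact Chain.refl _
  | succ k ih =>
      have h := ih (m + 1)
      have e : m + 1 + k + 1 = m + (k + 1) + 1 := by omega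
      rw [e] at h
      exact Chain.step (Or.inl (Rot.root (leftCat k) leaf (rightCat m))) h

theorem caterpillar_distance (n : ℕ) :
    dR (leftCat n) (rightCat n) = n - 1 := by
  cases n with
  | zero =>
      have h0 : Chain 0 (leftCat 0) (rightCat 0) := Chain.refl _
      simp only [dR]
      rw [Nat.sInf_eq_zero]
      exact Or.inl h0
  | succ k =>
      have hub : Chain k (leftCat (k + 1)) (rightCat (k + 1)) := by
        have h := chain_lc_rc k 0
        simpa [rightCat, leftCat] using h
      apply le_antisymm
      · have : (k + 1) - 1 = k := by omega
        rw [this]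
        exact Nat.sInf_le hub
      · apply le_csInf ⟨k, hub⟩
        intro m hm
        have h := chain_rdep hm
        have h1 : rdep (rightCat (k + 1)) = k + 1 := rdep_rightCat _
        have h2 : rdep (leftCat (k + 1)) = 1 := rfl
        omega

end BT
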